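/- Let n ≥ 1 and let π be a 321-avoiding permutation of {1,…,n} which is not the identity, with excedance locations i_1 < i_2 < ⋯ < i_r. If for some j with 2 ≤ j ≤ r one has π(i_{j−1}) < i_j, then π(x) = x for every index x with π(i_{j−1}) < x < i_j. -/

import Mathlib

/-- A permutation `π` of `{1,…,n}` (modeled as `Fin n`) is 321-avoiding if there are no
indices `i < j < k` with `π k < π j < π i`. -/
def Avoids321 {n : ℕ} (π : Equiv.Perm (Fin n)) : Prop :=
  ∀ i j k : Fin n, i < j → j < k → ¬(π k < π j ∧ π j < π i)

/-- Let `π` be a 321-avoiding permutation of `{1,…,n}` (so `1 ≤ n`), not the identity, with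
excedance locations `i_1 < ⋯ < i_{r+1}` (here `ι 0, …, ι (Fin.last r)`).  If for some `j`
the consecutive excedance locations `i_{j−1} = ι j.castSucc` and `i_j = ι j.succ` satisfy
`π(i_{j−1}) < i_j`, then `π x = x` for every index `x` with `π(i_{j−1}) < x < i_j`. -/
theorem stmt14 (n r : ℕ) (hn : 1 ≤ n) (π : Equiv.Perm (Fin n)) (h321 : Avoids321 π)
    (hne : π ≠ 1)
    (ι : Fin (r + 1) → Fin n) (hmono : StrictMono ι)
    (hexc : ∀ x : Fin n, x < π x ↔ ∃ j, ι j = x)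
    (j : Fin r) (hj : π (ι j.castSucc) < ι j.succ) :
    ∀ x : Fin n, π (ι j.castSucc) < x → x < ι j.succ → π x = x := by
  set a := ι j.castSucc with ha_def
  set b := ι j.succ with hb_def
  have ha : a < π a := (hexc a).mpr ⟨_, rfl⟩
  -- no excedance location strictly between a and b
  have hnoexc : ∀ z : Fin n, a < z → z < b → ¬ z < π z := by
    intro z h1 h2 hz
    obtain ⟨k, hk⟩ := (hexc z).mp hz
    have h1' : j.castSucc < k := hmono.lt_iff_lt.mp (by rw [hk]; exact h1)
    have h2' : k < j.succ := hmono.lt_iff_lt.mp (by rw [hk]; exact h2)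
    have e1 : (j.castSucc : ℕ) < (k : ℕ) := h1'
    have e2 : (k : ℕ) < (j.succ : ℕ) := h2'
    simp [Fin.val_succ] at e1 e2
    omega
  have key : ∀ m : ℕ, ∀ x : Fin n, (x : ℕ) ≤ m → π a < x → x < b → π x = x := by
    intro m
    induction m with
    | zero =>
      intro x hx h1 h2
      have : (π a : ℕ) < (x : ℕ) := h1
      omega
    | succ m ih =>
      intro x hxm h1 h2
      by_cases hc : (x : ℕ) ≤ m
      · exact ih x hc h1 h2
      have hax : a < x := lt_trans ha h1
      have hle : π x ≤ x := not_lt.mp (hnoexc x hax h2)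
      by_contra hne'
      have hlt : π x < x := lt_of_le_of_ne hle hne'
      -- find p < x with x ≤ π p
      have hp : ∃ p : Fin n, p < x ∧ x ≤ π p := by
        by_contra hc'
        push_neg at hc'
        have hcard : (Finset.Iic x).card ≤ (Finset.Iio x).card := by
          apply Finset.card_le_card_of_injOn π
          · intro z hz
            simp only [Finset.mem_coe, Finset.mem_Iic] at hz
            simp only [Finset.mem_coe, Finset.mem_Iio]
            rcases lt_or_eq_of_le hz with h | h
            · exact hc' z h
            · rw [h]; exact hlt
          · exact fun u _ v _ h => π.injective h
        rw [Fin.card_Iic, Fin.card_Iio] at hcard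
        omega
      obtain ⟨p, hpx, hxp⟩ := hp
      -- π x < π a
      have hπxa : π x < π a := by
        rcases lt_trichotomy (π x) (π a) with h | h | h
        · exact h
        · exfalso
          have : x = a := π.injective h
          rw [this] at hlt
          exact absurd (lt_trans ha (this ▸ h1)) (lt_irrefl _)
        · exfalso
          have hfix : π (π x) = π x := by
            apply ih (π x)
            · have : (π x : ℕ) < (x : ℕ) := hlt
              omega
            · exact h
            · exact lt_trans hlt h2
          have := π.injective hfix
          rw [this] at hlt
          exact lt_irrefl _ hlt
      -- p < a
      have hpa : p < a := by
        rcases lt_trichotomy p a with h | h | h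
        · exact h
        · exfalso
          rw [h] at hxp
          exact absurd (lt_of_lt_of_le h1 hxp) (lt_irrefl _)
        · exfalso
          exact hnoexc p h (lt_trans hpx h2) (lt_of_lt_of_le hpx hxp)
      exact h321 p a x hpa hax ⟨hπxa, lt_of_lt_of_le h1 hxp⟩
  intro x hx1 hx2
  exact key (x : ℕ) x le_rfl hx1 hx2
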